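/- Let d ≥ 1 and k ∈ ℕ. For every multi-index a = (a₁,…,a_d) ∈ {0,1,…,2^k−1}^d, define the interval i(a) := a₁ 2^{−k} + a₂ 2^{−2k} + ⋯ + a_d 2^{−dk} + [0, 2^{−dk}] ⊆ [0,1] and the cube c(a) := 2^{−k} a + [0, 2^{−k}]^d ⊆ [0,1]^d. Then γ_k maps the interior of i(a) into c(a), i.e., γ_k(int(i(a))) ⊆ c(a). -/

import Mathlib

open MeasureTheory Real Set Filter

noncomputable section

/-- The spherical parametrization `φ : ℝ^{n-1} → ℝⁿ` (angles given as `θ : ℕ → ℝ`;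
only the entries `θ 0, …, θ (n-2)` matter).  The first component is
`cos θ₀ ∏_{j=1}^{n-2} sin θ_j`, the second is `sin θ₀ ∏_{j=1}^{n-2} sin θ_j`, and for
`1 ≤ i ≤ n-2` the `(i+2)`-nd component (index `i+1`) is `cos θ_i ∏_{j=i+1}^{n-2} sin θ_j`. -/
def sphParam (n : ℕ) (θ : ℕ → ℝ) : EuclideanSpace ℝ (Fin n) := WithLp.toLp 2 fun m =>
  if (m : ℕ) = 0 then Real.cos (θ 0) * ∏ j ∈ Finset.Ico 1 (n - 1), Real.sin (θ j)
  else if (m : ℕ) = 1 then Real.sin (θ 0) * ∏ j ∈ Finset.Ico 1 (n - 1), Real.sin (θ j)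
  else Real.cos (θ ((m : ℕ) - 1)) * ∏ j ∈ Finset.Ico (m : ℕ) (n - 1), Real.sin (θ j)

/-- `g(θ) = ∏_{j=1}^{n-2} |sin θ_j|^j`, the square root of the Gram determinant of `φ`. -/
def gramG (n : ℕ) (θ : ℕ → ℝ) : ℝ := ∏ j ∈ Finset.Ico 1 (n - 1), |Real.sin (θ j)| ^ j

/-- The angle dither `θ_k(τ) = (τ, 2^{k-1} τ, 2^{2k-1} τ, …, 2^{(n-2)k-1} τ)`. -/
def ditherAngle (k : ℕ) (τ : ℝ) : ℕ → ℝ := fun j =>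
  if j = 0 then τ else 2 ^ (j * k - 1) * τ

/-- The dither signal `U_k = φ ∘ θ_k`. -/
def ditherU (n k : ℕ) (τ : ℝ) : EuclideanSpace ℝ (Fin n) := sphParam n (ditherAngle k τ)

/-- The dither signal `v_k(τ) = g(θ_k(τ)) U_k(τ)`. -/
def ditherV (n k : ℕ) (τ : ℝ) : EuclideanSpace ℝ (Fin n) :=
  gramG n (ditherAngle k τ) • ditherU n k τ

/-- The closed unit ball `𝔹` of `ℝⁿ`. -/
def unitBall (n : ℕ) : Set (EuclideanSpace ℝ (Fin n)) := Metric.closedBall 0 1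

/-- The volume `vol(𝔹)` of the closed unit ball. -/
def volB (n : ℕ) : ℝ := (volume (unitBall n)).toReal

/-- The averaged objective function `J̄_a(x) = (1/vol 𝔹) ∫_𝔹 J(x + aξ) dξ`. -/
def Jbar (n : ℕ) (J : EuclideanSpace ℝ (Fin n) → ℝ) (a : ℝ) (x : EuclideanSpace ℝ (Fin n)) : ℝ :=
  (volB n)⁻¹ * ∫ ξ in unitBall n, J (x + a • ξ)

/-- The surface measure `λ_{∂𝔹}` on the unit sphere of `ℝⁿ`. -/
def sphereMeasure (n : ℕ) : Measure (Metric.sphere (0 : EuclideanSpace ℝ (Fin n)) 1) :=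
  (volume : Measure (EuclideanSpace ℝ (Fin n))).toSphere

/-- The constant `c = vol(𝔹)/(2π^{n-1})`. -/
def cConst (n : ℕ) : ℝ := volB n / (2 * π ^ (n - 1))

/-- The averaged vector field `F̆_k(x) = (b/2π) ∫₀^{2π} J(x + a φ(θ_k τ)) g(θ_k τ) φ(θ_k τ) dτ`. -/
def Fbreve (n : ℕ) (J : EuclideanSpace ℝ (Fin n) → ℝ) (a b : ℝ) (k : ℕ)
    (x : EuclideanSpace ℝ (Fin n)) : EuclideanSpace ℝ (Fin n) :=
  (b / (2 * π)) • ∫ τ in (0:ℝ)..(2 * π),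
    (J (x + a • sphParam n (ditherAngle k τ)) * gramG n (ditherAngle k τ)) •
      sphParam n (ditherAngle k τ)

/-- The averaged map `Ĕ_k(η) = -(b/2π) η ∫₀^{2π} g(θ_k τ) φ(θ_k τ) dτ`. -/
def Ebreve (n : ℕ) (b : ℝ) (k : ℕ) (η : ℝ) : EuclideanSpace ℝ (Fin n) :=
  (-(b / (2 * π)) * η) •
    ∫ τ in (0:ℝ)..(2 * π), gramG n (ditherAngle k τ) • sphParam n (ditherAngle k τ)

/-- A (locally absolutely continuous) solution, in integral form, of the transformed
closed-loop system `x̃' = (J(x̃ + a U_k(ωt)) - η + d t)·b·v_k(ωt)`,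
`η' = -h η + h J(x̃ + a U_k(ωt)) + h d t` on the interval `I`. -/
def IsTransSol (n : ℕ) (J : EuclideanSpace ℝ (Fin n) → ℝ) (a b h ω : ℝ) (k : ℕ)
    (d : ℝ → ℝ) (I : Set ℝ) (x : ℝ → EuclideanSpace ℝ (Fin n)) (η : ℝ → ℝ) : Prop :=
  I.OrdConnected ∧ ContinuousOn x I ∧ ContinuousOn η I ∧
  ∀ t₀ ∈ I, ∀ t₁ ∈ I,
    IntervalIntegrable (fun s =>
      ((J (x s + a • ditherU n k (ω * s)) - η s + d s) * b) • ditherV n k (ω * s))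
      volume t₀ t₁ ∧
    IntervalIntegrable (fun s =>
      -h * η s + h * J (x s + a • ditherU n k (ω * s)) + h * d s) volume t₀ t₁ ∧
    x t₁ = x t₀ + ∫ s in t₀..t₁,
      ((J (x s + a • ditherU n k (ω * s)) - η s + d s) * b) • ditherV n k (ω * s) ∧
    η t₁ = η t₀ + ∫ s in t₀..t₁,
      (-h * η s + h * J (x s + a • ditherU n k (ω * s)) + h * d s)

/-- A (locally absolutely continuous) solution, in integral form, of the gradient system
`x̄' = κ ∇J̄_a(x̄) + f t` on the interval `I`. -/
def IsGradSol (n : ℕ) (J : EuclideanSpace ℝ (Fin n) → ℝ) (a κ : ℝ)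
    (f : ℝ → EuclideanSpace ℝ (Fin n)) (I : Set ℝ)
    (x : ℝ → EuclideanSpace ℝ (Fin n)) : Prop :=
  I.OrdConnected ∧ ContinuousOn x I ∧
  ∀ t₀ ∈ I, ∀ t₁ ∈ I,
    IntervalIntegrable (fun s => κ • gradient (Jbar n J a) (x s) + f s) volume t₀ t₁ ∧
    x t₁ = x t₀ + ∫ s in t₀..t₁, (κ • gradient (Jbar n J a) (x s) + f s)

/-- The unit cube `[0,1]^d`. -/
def cube (d : ℕ) : Set (EuclideanSpace ℝ (Fin d)) := {z | ∀ j, z j ∈ Icc (0:ℝ) 1}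

/-- The curve `γ_k(σ) = (saw σ, saw (2^k σ), …, saw (2^{(d-1)k} σ))`,
where `saw` is the sawtooth wave `σ ↦ σ - ⌊σ⌋`. -/
def gammaCurve (d k : ℕ) (σ : ℝ) : EuclideanSpace ℝ (Fin d) :=
  WithLp.toLp 2 fun j => Int.fract (2 ^ ((j : ℕ) * k) * σ)

/-- The modulus of continuity of `f` on `[0,1]^d` of order `ε`
(with respect to the Euclidean norm). -/
def modCont (d : ℕ) (f : EuclideanSpace ℝ (Fin d) → ℝ) (ε : ℝ) : ℝ :=
  sSup {r | ∃ z ∈ cube d, ∃ ζ ∈ cube d, ‖z - ζ‖ ≤ ε ∧ r = |f z - f ζ|}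

/-- Extension of a `d`-tuple to a function `ℕ → ℝ` (by zero). -/
def padTo (d : ℕ) (z : EuclideanSpace ℝ (Fin d)) : ℕ → ℝ :=
  fun j => if h : j < d then z ⟨j, h⟩ else 0

/-- The map `Θ(z) = π (2 z₀, z₁, …, z_{n-2})`. -/
def ThetaMap (z : ℕ → ℝ) : ℕ → ℝ := fun j => if j = 0 then 2 * π * z 0 else π * z j

/-- `W = (0,2π) × (0,π)^{n-2}`. -/
def Wset (n : ℕ) : Set (EuclideanSpace ℝ (Fin (n-1))) :=
  {θ | ∀ j : Fin (n-1), θ j ∈ Ioo 0 (if (j : ℕ) = 0 then 2 * π else π)}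

/-- `2W = (0,4π) × (0,2π)^{n-2}`. -/
def W2set (n : ℕ) : Set (EuclideanSpace ℝ (Fin (n-1))) :=
  {θ | ∀ j : Fin (n-1), θ j ∈ Ioo 0 (if (j : ℕ) = 0 then 4 * π else 2 * π)}

/-- A class-`𝒦` function: continuous and strictly increasing on `[0,∞)` with `γ 0 = 0`. -/
def IsClassK (γ : ℝ → ℝ) : Prop :=
  ContinuousOn γ (Ici 0) ∧ StrictMonoOn γ (Ici 0) ∧ γ 0 = 0

/-- A class-`𝒦∞` function. -/
def IsClassKInf (α : ℝ → ℝ) : Prop := IsClassK α ∧ Tendsto α atTop atTop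

/-- A class-`𝒦ℒ` function. -/
def IsClassKL (β : ℝ → ℝ → ℝ) : Prop :=
  (∀ t ≥ (0 : ℝ), IsClassK fun s => β s t) ∧
  ∀ s ≥ (0 : ℝ), AntitoneOn (β s) (Ici 0) ∧ Tendsto (β s) atTop (nhds 0)

/-- The `L∞` (essential supremum) norm of a function on `ℝ`. -/
def LinfNorm {F : Type*} [NormedAddCommGroup F] (d : ℝ → F) : ℝ :=
  (eLpNorm d ⊤ volume).toReal

/-- `d` is (a.e. strongly) measurable and essentially bounded with `‖d‖_∞ ≤ δ`. -/
def IsEssBdd {F : Type*} [NormedAddCommGroup F] (d : ℝ → F) (δ : ℝ) : Prop :=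
  AEStronglyMeasurable d volume ∧ eLpNorm d ⊤ volume ≤ ENNReal.ofReal δ

lemma geo_aux (k : ℕ) (b : ℕ → ℕ) (hb : ∀ i, b i < 2 ^ k) (M : ℕ) :
    ∑ i ∈ Finset.range M, (b i : ℝ) / 2 ^ ((i + 1) * k) ≤ 1 - ((2:ℝ) ^ (M * k))⁻¹ := by
  induction M with
  | zero => simp
  | succ M ih =>
    rw [Finset.sum_range_succ]
    have h1 : (b M : ℝ) ≤ 2 ^ k - 1 := by
      have h2 : (b M : ℝ) + 1 ≤ (2:ℝ) ^ k := by exact_mod_cast hb M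
      linarith
    have hpow : (2:ℝ) ^ ((M + 1) * k) = 2 ^ (M * k) * 2 ^ k := by
      rw [← pow_add]; ring_nf
    have hq : (0:ℝ) < 2 ^ (M * k) := by positivity
    have hk2 : (0:ℝ) < 2 ^ k := by positivity
    have h3 : (b M : ℝ) / 2 ^ ((M + 1) * k) ≤ (2 ^ k - 1) / (2 ^ (M * k) * 2 ^ k) := by
      rw [← hpow]; gcongr
    have heq : (1 - ((2:ℝ) ^ (M * k))⁻¹) + (2 ^ k - 1) / (2 ^ (M * k) * 2 ^ k)
        = 1 - ((2:ℝ) ^ ((M+1) * k))⁻¹ := by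
      rw [hpow]; field_simp; ring
    linarith

/-- `γ_k` maps the interior of the subinterval `i(a)` into the subcube `c(a)`. -/
theorem statement6 (d : ℕ) (hd : 1 ≤ d) (k : ℕ) (hk : 1 ≤ k)
    (a : Fin d → ℕ) (ha : ∀ m, a m < 2 ^ k) :
    ∀ σ ∈ Ioo (∑ j : Fin d, (a j : ℝ) / 2 ^ (((j : ℕ) + 1) * k))
        ((∑ j : Fin d, (a j : ℝ) / 2 ^ (((j : ℕ) + 1) * k)) + ((2:ℝ) ^ (d * k))⁻¹),
      ∀ j : Fin d, gammaCurve d k σ j ∈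
        Icc ((a j : ℝ) / 2 ^ k) ((a j : ℝ) / 2 ^ k + ((2:ℝ) ^ k)⁻¹) := by
  intro σ hσ j
  -- extend `a` to all of ℕ
  set A : ℕ → ℕ := fun i => if h : i < d then a ⟨i, h⟩ else 0 with hA
  have hAlt : ∀ i, A i < 2 ^ k := by
    intro i
    by_cases h : i < d
    · simpa [hA, h] using ha ⟨i, h⟩
    · simp only [hA, h, dif_neg, not_false_iff]
      positivity
  -- rewrite the base point as a range sum
  have hS : (∑ j : Fin d, (a j : ℝ) / 2 ^ (((j : ℕ) + 1) * k))
      = ∑ i ∈ Finset.range d, (A i : ℝ) / 2 ^ ((i + 1) * k) := by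
    rw [← Fin.sum_univ_eq_sum_range (fun i => (A i : ℝ) / 2 ^ ((i + 1) * k)) d]
    refine Finset.sum_congr rfl fun x _ => ?_
    simp [hA, x.isLt]
  set S : ℝ := ∑ i ∈ Finset.range d, (A i : ℝ) / 2 ^ ((i + 1) * k) with hSdef
  rw [hS] at hσ
  obtain ⟨hσ1, hσ2⟩ := hσ
  set jv : ℕ := (j : ℕ) with hjv
  have hjd : jv < d := j.isLt
  have hAj : (A jv : ℝ) = (a j : ℝ) := by
    simp [hA, hjd, hjv]
  -- split 2^{jv k} S into integer + tail parts
  set N : ℕ := ∑ i ∈ Finset.range jv, A i * 2 ^ ((jv - 1 - i) * k) with hN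
  set T : ℝ := ∑ m ∈ Finset.range (d - jv), (A (jv + m) : ℝ) / 2 ^ ((m + 1) * k) with hT
  have hsplit : (2:ℝ) ^ (jv * k) * S = (N : ℝ) + T := by
    rw [hSdef, Finset.mul_sum]
    have hsplit0 : Finset.range d = Finset.range jv ∪ Finset.Ico jv d := by
      rw [Finset.range_eq_Ico, Finset.range_eq_Ico]
      exact (Finset.Ico_union_Ico_eq_Ico (Nat.zero_le _) (le_of_lt hjd)).symm
    rw [hsplit0, Finset.sum_union]
    · congr 1
      · rw [hN]
        push_cast
        refine Finset.sum_congr rfl fun i hi => ?_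
        have hi' : i < jv := Finset.mem_range.mp hi
        have he : jv = (i + 1) + (jv - 1 - i) := by omega
        have hpe : (2:ℝ) ^ (jv * k) = 2 ^ ((i + 1) * k) * 2 ^ ((jv - 1 - i) * k) := by
          rw [← pow_add, ← add_mul, ← he]
        rw [hpe]
        have : (0:ℝ) < 2 ^ ((i + 1) * k) := by positivity
        field_simp
      · rw [hT, Finset.sum_Ico_eq_sum_range]
        refine Finset.sum_congr rfl fun m _ => ?_
        have hpe : (2:ℝ) ^ ((jv + m + 1) * k) = 2 ^ (jv * k) * 2 ^ ((m + 1) * k) := by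
          rw [← pow_add]; ring_nf
        rw [hpe]
        have h1 : (0:ℝ) < 2 ^ (jv * k) := by positivity
        have h2 : (0:ℝ) < 2 ^ ((m + 1) * k) := by positivity
        field_simp
    · rw [Finset.range_eq_Ico]
      exact Finset.Ico_disjoint_Ico_consecutive 0 jv d
  -- bounds on T
  have hT_lo : (A jv : ℝ) / 2 ^ k ≤ T := by
    have h0 : 0 ∈ Finset.range (d - jv) := by
      simp; omega
    have := Finset.single_le_sum
      (f := fun m => (A (jv + m) : ℝ) / 2 ^ ((m + 1) * k))
      (fun i _ => by positivity) h0
    simpa using this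
  have hT_hi : T ≤ (A jv : ℝ) / 2 ^ k + ((2:ℝ) ^ k)⁻¹ - ((2:ℝ) ^ ((d - jv) * k))⁻¹ := by
    have hM : d - jv = (d - jv - 1) + 1 := by omega
    set M := d - jv - 1 with hMdef
    rw [hT, hM, Finset.sum_range_succ']
    have htail : ∑ m ∈ Finset.range M, (A (jv + (m + 1)) : ℝ) / 2 ^ ((m + 1 + 1) * k)
        ≤ ((2:ℝ) ^ k)⁻¹ - ((2:ℝ) ^ ((M + 1) * k))⁻¹ := by
      have hgeo := geo_aux k (fun i => A (jv + (i + 1))) (fun i => hAlt _) M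
      have hre : ∑ m ∈ Finset.range M, (A (jv + (m + 1)) : ℝ) / 2 ^ ((m + 1 + 1) * k)
          = (∑ m ∈ Finset.range M, (A (jv + (m + 1)) : ℝ) / 2 ^ ((m + 1) * k)) * ((2:ℝ) ^ k)⁻¹ := by
        rw [Finset.sum_mul]
        refine Finset.sum_congr rfl fun m _ => ?_
        have hpe : (2:ℝ) ^ ((m + 1 + 1) * k) = 2 ^ ((m + 1) * k) * 2 ^ k := by
          rw [← pow_add]; ring_nf
        rw [hpe]
        have h1 : (0:ℝ) < 2 ^ ((m + 1) * k) := by positivity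
        have h2 : (0:ℝ) < 2 ^ k := by positivity
        field_simp
      have hk2 : (0:ℝ) < 2 ^ k := by positivity
      have hMk : (0:ℝ) < 2 ^ (M * k) := by positivity
      have hpe2 : (2:ℝ) ^ ((M + 1) * k) = 2 ^ (M * k) * 2 ^ k := by
        rw [← pow_add]; ring_nf
      rw [hre, hpe2]
      calc (∑ m ∈ Finset.range M, (A (jv + (m + 1)) : ℝ) / 2 ^ ((m + 1) * k)) * ((2:ℝ) ^ k)⁻¹
          ≤ (1 - ((2:ℝ) ^ (M * k))⁻¹) * ((2:ℝ) ^ k)⁻¹ := by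
            gcongr
        _ = ((2:ℝ) ^ k)⁻¹ - ((2:ℝ) ^ (M * k) * 2 ^ k)⁻¹ := by
            field_simp
    have hf0 : (A (jv + 0) : ℝ) / 2 ^ ((0 + 1) * k) = (A jv : ℝ) / 2 ^ k := by
      norm_num
    rw [hf0]
    linarith [htail]
  -- bound the dither part
  have hd1 : (0:ℝ) < 2 ^ (jv * k) * (σ - S) := by
    have : (0:ℝ) < 2 ^ (jv * k) := by positivity
    nlinarith
  have hd2 : (2:ℝ) ^ (jv * k) * (σ - S) < ((2:ℝ) ^ ((d - jv) * k))⁻¹ := by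
    have hpe : (2:ℝ) ^ (d * k) = 2 ^ (jv * k) * 2 ^ ((d - jv) * k) := by
      rw [← pow_add, ← add_mul]
      congr 2
      omega
    have h1 : (0:ℝ) < 2 ^ (jv * k) := by positivity
    have h2 : (0:ℝ) < 2 ^ ((d - jv) * k) := by positivity
    have h3 : σ - S < ((2:ℝ) ^ (d * k))⁻¹ := by linarith
    calc (2:ℝ) ^ (jv * k) * (σ - S) < 2 ^ (jv * k) * ((2:ℝ) ^ (d * k))⁻¹ := by
          exact (mul_lt_mul_iff_right₀ h1).mpr h3
      _ = ((2:ℝ) ^ ((d - jv) * k))⁻¹ := by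
          rw [hpe]; field_simp
  -- the value b
  have hb : (2:ℝ) ^ (jv * k) * σ - (N : ℝ) = 2 ^ (jv * k) * (σ - S) + T := by
    rw [mul_sub]; linarith [hsplit]
  have hAjk : (A jv : ℝ) ≤ 2 ^ k - 1 := by
    have h2 : (A jv : ℝ) + 1 ≤ (2:ℝ) ^ k := by exact_mod_cast hAlt jv
    linarith
  have hk2 : (0:ℝ) < 2 ^ k := by positivity
  have hAj0 : (0:ℝ) ≤ (A jv : ℝ) / 2 ^ k := by positivity
  have hdjk : (0:ℝ) < ((2:ℝ) ^ ((d - jv) * k))⁻¹ := by positivity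
  have hb0 : (0:ℝ) ≤ 2 ^ (jv * k) * σ - (N : ℝ) := by
    rw [hb]; linarith
  have hb1 : 2 ^ (jv * k) * σ - (N : ℝ) < 1 := by
    rw [hb]
    have : (A jv : ℝ) / 2 ^ k + ((2:ℝ) ^ k)⁻¹ ≤ 1 := by
      rw [inv_eq_one_div, ← add_div, div_le_one hk2]
      linarith
    linarith
  have hfr : Int.fract ((2:ℝ) ^ (jv * k) * σ) = 2 ^ (jv * k) * σ - (N : ℝ) := by
    rw [Int.fract_eq_iff]
    exact ⟨hb0, hb1, ⟨(N : ℤ), by push_cast; ring⟩⟩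
  show Int.fract ((2:ℝ) ^ (jv * k) * σ) ∈ Icc ((a j : ℝ) / 2 ^ k) ((a j : ℝ) / 2 ^ k + ((2:ℝ) ^ k)⁻¹)
  rw [hfr, ← hAj]
  constructor
  · rw [hb]; linarith
  · rw [hb]; linarith
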